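/- Let X ⊆ 𝒜^{ℤ^d} be a subshift, f ∈ SV_d(X), and Λ ⊆ ℤ^d a nonempty finite set, with γ_Λ as defined. Then: (a) for each x ∈ X, γ_Λ(·|x) is a Borel probability measure on X; (b) for each Borel set A ⊆ X, the function x ↦ γ_Λ(A|x) is 𝓕_{Λ^c}-measurable; (c) for every B ∈ 𝓕_{Λ^c} and every x ∈ X, γ_Λ(B|x) = 1_B(x). -/

import Mathlib

open MeasureTheory Filter Topology

/-- The full shift configuration space `𝒜^{ℤ^d}`. -/
abbrev Config (d : ℕ) (A : Type*) := (Fin d → ℤ) → A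

/-- The shift action of `ℤ^d`: `(T^k x)_i = x_{i+k}`. -/
def shift {d : ℕ} {A : Type*} (k : Fin d → ℤ) (x : Config d A) : Config d A :=
  fun i => x (i + k)

/-- The ℓ∞ norm of a lattice point, `‖k‖_∞ = max_i |k_i|`. -/
def normInf {d : ℕ} (k : Fin d → ℤ) : ℕ :=
  Finset.univ.sup fun i => (k i).natAbs

/-- The box `Λ_N = {k : ‖k‖_∞ ≤ N}` as a finset. -/
noncomputable def boxF (d N : ℕ) : Finset (Fin d → ℤ) :=
  Finset.Icc (fun _ => -(N : ℤ)) (fun _ => (N : ℤ))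

/-- The `n`-th variation of `f` on a subshift `X`:
`δ_n(f) = sup {|f x - f y| : x, y ∈ X, x_{Λ_n} = y_{Λ_n}}`. -/
noncomputable def deltaVar {d : ℕ} {A : Type*} (X : Set (Config d A))
    (f : Config d A → ℝ) (n : ℕ) : ℝ :=
  sSup {r : ℝ | ∃ x ∈ X, ∃ y ∈ X,
    (∀ k : Fin d → ℤ, normInf k ≤ n → x k = y k) ∧ r = |f x - f y|}

/-- `f` is bounded on `X`. -/
def BoundedOn {d : ℕ} {A : Type*} (X : Set (Config d A)) (f : Config d A → ℝ) : Prop :=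
  ∃ C : ℝ, ∀ x ∈ X, |f x| ≤ C

/-- Membership in `SV_d(X)`: bounded with `Σ_{n ≥ 1} n^{d-1} δ_n(f) < ∞`. -/
def MemSV (d : ℕ) {A : Type*} (X : Set (Config d A)) (f : Config d A → ℝ) : Prop :=
  BoundedOn X f ∧ Summable fun n : ℕ => ((n : ℝ) + 1) ^ (d - 1) * deltaVar X f (n + 1)

/-- The sup norm of `f` over `X`. -/
noncomputable def supNormOn {d : ℕ} {A : Type*} (X : Set (Config d A))
    (f : Config d A → ℝ) : ℝ :=
  sSup {r : ℝ | ∃ x ∈ X, r = |f x|}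

/-- The `SV_d` norm: `‖f‖_{SV_d} = ‖f‖_∞ + Σ_{n ≥ 1} n^{d-1} δ_n(f)`. -/
noncomputable def svNorm (d : ℕ) {A : Type*} (X : Set (Config d A))
    (f : Config d A → ℝ) : ℝ :=
  supNormOn X f + ∑' n : ℕ, ((n : ℝ) + 1) ^ (d - 1) * deltaVar X f (n + 1)

/-- The Gibbs relation `𝔗`: pairs of points of `X` that agree outside a finite set. -/
def gibbsRel {d : ℕ} {A : Type*} (X : Set (Config d A)) :
    Set (Config d A × Config d A) :=
  {p | p.1 ∈ X ∧ p.2 ∈ X ∧ ∃ Λ : Finset (Fin d → ℤ), ∀ k ∉ Λ, p.1 k = p.2 k}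

/-- The cocycle `φ_f(x,y) = Σ_{k ∈ ℤ^d} (f(T^k y) - f(T^k x))` (unordered sum). -/
noncomputable def phiF {d : ℕ} {A : Type*} (f : Config d A → ℝ)
    (x y : Config d A) : ℝ :=
  ∑' k : Fin d → ℤ, (f (shift k y) - f (shift k x))

/-- Membership in `𝓕(X)`: homeomorphisms of `X` changing only finitely many coordinates,
uniformly. -/
def memF {d : ℕ} {A : Type*} [TopologicalSpace A] (X : Set (Config d A))
    (φ : ↥X ≃ₜ ↥X) : Prop :=
  ∃ n : ℕ, 1 ≤ n ∧ ∀ x : ↥X, ∀ k : Fin d → ℤ, n < normInf k → (φ x).1 k = x.1 k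

/-- `𝓕_n(X)`. -/
def Fn {d : ℕ} {A : Type*} [TopologicalSpace A] (X : Set (Config d A)) (n : ℕ) :
    Set (↥X ≃ₜ ↥X) :=
  {φ | (∀ x : ↥X, ∀ k : Fin d → ℤ, n < normInf k → (φ x).1 k = x.1 k) ∧
    ∀ x y : ↥X,
      ((∀ k : Fin d → ℤ, normInf k ≤ n → x.1 k = y.1 k) ↔
        (∀ k : Fin d → ℤ, normInf k ≤ n → (φ x).1 k = (φ y).1 k))}

/-- The configuration `ω x_{Λ^c}`: equal to `ω` on `Λ` and to `x` off `Λ`. -/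
def patch {d : ℕ} {A : Type*} (Λ : Finset (Fin d → ℤ)) (ω : {k // k ∈ Λ} → A)
    (x : Config d A) : Config d A :=
  fun k => if h : k ∈ Λ then ω ⟨k, h⟩ else x k

/-- `f_n = Σ_{i ∈ Λ_n} f ∘ T^i`. -/
noncomputable def fnSum (d : ℕ) {A : Type*} (f : Config d A → ℝ) (n : ℕ)
    (z : Config d A) : ℝ :=
  ∑ i ∈ boxF d n, f (shift i z)

/-- The σ-algebra `𝓕_Δ` on `X`, generated by the coordinate projections `x ↦ x_i`, `i ∈ Δ`. -/
def cylSigma {d : ℕ} {A : Type*} [MeasurableSpace A] (X : Set (Config d A))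
    (Δ : Set (Fin d → ℤ)) : MeasurableSpace ↥X :=
  MeasurableSpace.comap (fun (x : ↥X) (i : ↥Δ) => x.1 i.1) MeasurableSpace.pi

/-- `μ` is a Gibbs measure for `f`: `(φ_f, 𝔗)`-conformal. -/
def IsGibbs (d : ℕ) {A : Type*} [MeasurableSpace A] (X : Set (Config d A))
    (f : Config d A → ℝ) (μ : Measure ↥X) : Prop :=
  ∀ V W : ↥X → ↥X, Measurable V → Measurable W →
    (∀ x, W (V x) = x) → (∀ x, V (W x) = x) →
    (∀ x : ↥X, ((x.1, (V x).1) ∈ gibbsRel X)) →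
    (Measure.map V μ ≪ μ ∧
      ∀ᵐ x ∂μ, (Measure.map V μ).rnDeriv μ x
        = ENNReal.ofReal (Real.exp (phiF f x.1 (W x).1)))

/-- `μ` is a topological Gibbs measure for `f`: `(φ_f|_{𝔗⁰}, 𝔗⁰)`-conformal. -/
def IsTopGibbs (d : ℕ) {A : Type*} [TopologicalSpace A] [MeasurableSpace A]
    (X : Set (Config d A)) (f : Config d A → ℝ) (μ : Measure ↥X) : Prop :=
  ∀ φ : ↥X ≃ₜ ↥X, memF X φ →
    (Measure.map (⇑φ) μ ≪ μ ∧
      ∀ᵐ x ∂μ, (Measure.map (⇑φ) μ).rnDeriv μ x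
        = ENNReal.ofReal (Real.exp (phiF f x.1 (φ.symm x).1)))

/-- Finite-volume Gibbsian ratios defining the kernel `γ_Λ`. -/
noncomputable def gammaFn (d : ℕ) {A : Type*} [Fintype A] (X : Set (Config d A))
    (f : Config d A → ℝ) (Λ : Finset (Fin d → ℤ)) (S : Set ↥X) (x : Config d A)
    (n : ℕ) : ℝ :=
  (∑ ω : {k // k ∈ Λ} → A,
      (Subtype.val '' S).indicator (fun z => Real.exp (fnSum d f n z)) (patch Λ ω x)) /
  (∑ η : {k // k ∈ Λ} → A,
      X.indicator (fun z => Real.exp (fnSum d f n z)) (patch Λ η x))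

/-- The kernel `γ_Λ(S | x)`, defined as the limit of the finite-volume ratios. -/
noncomputable def gamma (d : ℕ) {A : Type*} [Fintype A] (X : Set (Config d A))
    (f : Config d A → ℝ) (Λ : Finset (Fin d → ℤ)) (S : Set ↥X) (x : Config d A) : ℝ :=
  limUnder atTop (gammaFn d X f Λ S x)

/-- `X` is a subshift of finite type. -/
def IsSFT {d : ℕ} {A : Type*} (X : Set (Config d A)) : Prop :=
  ∃ n : ℕ, 1 ≤ n ∧ ∃ F : Set ({k : Fin d → ℤ // normInf k ≤ n} → A),
    X = {x : Config d A |
      ∀ l : Fin d → ℤ, (fun k : {k : Fin d → ℤ // normInf k ≤ n} => shift l x k.1) ∉ F}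

/-- The topological Gibbs relation `𝔗⁰`. -/
def topGibbsRel {d : ℕ} {A : Type*} [TopologicalSpace A] (X : Set (Config d A)) :
    Set (Config d A × Config d A) :=
  {p | ∃ (hx : p.1 ∈ X) (φ : ↥X ≃ₜ ↥X), memF X φ ∧ (φ ⟨p.1, hx⟩).1 = p.2}

/-- `f` is a local function on `X`. -/
def IsLocal {d : ℕ} {A : Type*} (X : Set (Config d A)) (f : Config d A → ℝ) : Prop :=
  ∃ Λ : Finset (Fin d → ℤ), ∀ x ∈ X, ∀ y ∈ X, (∀ k ∈ Λ, x k = y k) → f x = f y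

set_option linter.unusedSectionVars false
section Aux
variable {d : ℕ} {A : Type*}

lemma normInf_le_iff {k : Fin d → ℤ} {n : ℕ} : normInf k ≤ n ↔ ∀ j, (k j).natAbs ≤ n := by
  simp [normInf, Finset.sup_le_iff]

lemma mem_boxF {i : Fin d → ℤ} {n : ℕ} : i ∈ boxF d n ↔ normInf i ≤ n := by
  simp only [boxF, Finset.mem_Icc, normInf_le_iff]
  constructor
  · rintro ⟨h1, h2⟩ j
    rw [← Nat.cast_le (α := ℤ), Int.natCast_natAbs, abs_le]
    exact ⟨h1 j, h2 j⟩
  · intro h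
    have habs : ∀ j, -(n:ℤ) ≤ i j ∧ i j ≤ n := fun j => by
      rw [← abs_le, ← Int.natCast_natAbs]
      exact_mod_cast h j
    exact ⟨fun j => (habs j).1, fun j => (habs j).2⟩

lemma boxF_mono : Monotone (boxF d) := by
  intro m n hmn
  intro i hi
  rw [mem_boxF] at hi ⊢
  exact hi.trans hmn

lemma tendsto_boxF_atTop : Tendsto (boxF d) atTop atTop :=
  tendsto_atTop_finset_of_monotone boxF_mono
    (fun i => ⟨normInf i, mem_boxF.2 le_rfl⟩)

lemma card_boxF (n : ℕ) : (boxF d n).card = (2 * n + 1) ^ d := by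
  rw [boxF, Pi.card_Icc]
  have : ∀ j : Fin d, (Finset.Icc (-(n:ℤ)) (n:ℤ)).card = 2 * n + 1 := by
    intro j
    rw [Int.card_Icc]
    simp
    omega
  simp only [Finset.prod_congr rfl (fun j _ => this j), Finset.prod_const,
    Finset.card_univ, Fintype.card_fin]

lemma normInf_triangle (k i : Fin d → ℤ) : normInf i ≤ normInf (k + i) + normInf k := by
  rw [normInf_le_iff]
  intro j
  have : i j = (k j + i j) + (- k j) := by ring
  rw [this]
  calc ((k j + i j) + (- k j)).natAbs ≤ (k j + i j).natAbs + (- k j).natAbs :=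
        Int.natAbs_add_le _ _
    _ ≤ normInf (k + i) + normInf k := by
        gcongr
        · exact Finset.le_sup (f := fun i' => ((k + i) i').natAbs) (Finset.mem_univ j)
        · rw [Int.natAbs_neg]
          exact Finset.le_sup (f := fun i' => (k i').natAbs) (Finset.mem_univ j)

/-- The real-number inequality `a^d - b^d ≤ d * a^(d-1) * (a - b)`. -/
lemma pow_sub_pow_le_real : ∀ (m : ℕ) (a b : ℝ), 0 ≤ b → b ≤ a →
    a ^ m - b ^ m ≤ m * a ^ (m - 1) * (a - b) := by
  intro m
  induction m with
  | zero => intro a b _ _; simp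
  | succ n ih =>
    intro a b hb hba
    have ha : 0 ≤ a := hb.trans hba
    cases n with
    | zero => simp
    | succ p =>
      have key : a ^ (p + 2) - b ^ (p + 2) = a * (a ^ (p+1) - b ^ (p+1)) + b ^ (p+1) * (a - b) := by
        ring
      rw [key]
      have h1 : a * (a ^ (p+1) - b ^ (p+1)) ≤ a * ((p+1) * a ^ p * (a - b)) := by
        apply mul_le_mul_of_nonneg_left _ ha
        simpa using ih a b hb hba
      have h2 : b ^ (p+1) * (a - b) ≤ a ^ (p+1) * (a - b) := by
        apply mul_le_mul_of_nonneg_right (pow_le_pow_left₀ hb hba _) (by linarith)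
      calc a * (a ^ (p+1) - b ^ (p+1)) + b ^ (p+1) * (a - b)
          ≤ a * ((p+1) * a ^ p * (a - b)) + a ^ (p+1) * (a - b) := by linarith
        _ = (p + 2) * a ^ (p+1) * (a - b) := by ring
        _ = ((p + 1 + 1 : ℕ) : ℝ) * a ^ (p + 1 + 1 - 1) * (a - b) := by
            push_cast; ring_nf

end Aux
section Delta
variable {d : ℕ} {A : Type*} {X : Set (Config d A)} {f : Config d A → ℝ} {C : ℝ}

/-- The defining set for `deltaVar`. -/
def deltaSet (X : Set (Config d A)) (f : Config d A → ℝ) (n : ℕ) : Set ℝ :=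
  {r : ℝ | ∃ x ∈ X, ∃ y ∈ X,
    (∀ k : Fin d → ℤ, normInf k ≤ n → x k = y k) ∧ r = |f x - f y|}

lemma deltaVar_eq_sSup (n : ℕ) : deltaVar X f n = sSup (deltaSet X f n) := rfl

lemma deltaSet_nonempty (hne : X.Nonempty) (n : ℕ) : (deltaSet X f n).Nonempty := by
  obtain ⟨x0, hx0⟩ := hne
  exact ⟨0, x0, hx0, x0, hx0, fun _ _ => rfl, by simp⟩

lemma deltaSet_bddAbove (hC : ∀ x ∈ X, |f x| ≤ C) (n : ℕ) : BddAbove (deltaSet X f n) := by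
  refine ⟨2 * C, ?_⟩
  rintro r ⟨x, hx, y, hy, -, rfl⟩
  calc |f x - f y| ≤ |f x| + |f y| := abs_sub _ _
    _ ≤ 2 * C := by have := hC x hx; have := hC y hy; linarith

lemma deltaVar_nonneg (hne : X.Nonempty) (hC : ∀ x ∈ X, |f x| ≤ C) (n : ℕ) :
    0 ≤ deltaVar X f n := by
  obtain ⟨x0, hx0⟩ := hne
  exact le_csSup (deltaSet_bddAbove hC n) ⟨x0, hx0, x0, hx0, fun _ _ => rfl, by simp⟩

lemma deltaVar_le_of_agree (hC : ∀ x ∈ X, |f x| ≤ C) {n : ℕ} {x y : Config d A}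
    (hx : x ∈ X) (hy : y ∈ X) (h : ∀ k : Fin d → ℤ, normInf k ≤ n → x k = y k) :
    |f x - f y| ≤ deltaVar X f n :=
  le_csSup (deltaSet_bddAbove hC n) ⟨x, hx, y, hy, h, rfl⟩

lemma deltaVar_antitone (hne : X.Nonempty) (hC : ∀ x ∈ X, |f x| ≤ C) :
    Antitone (deltaVar X f) := by
  intro m n hmn
  apply csSup_le_csSup (deltaSet_bddAbove hC m) (deltaSet_nonempty hne n)
  rintro r ⟨x, hx, y, hy, hagree, rfl⟩
  exact ⟨x, hx, y, hy, fun k hk => hagree k (hk.trans hmn), rfl⟩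

/-- From summability, small variations for large boxes. -/
lemma exists_deltaVar_lt (hne : X.Nonempty) (hC : ∀ x ∈ X, |f x| ≤ C)
    (hsum : Summable fun n : ℕ => ((n : ℝ) + 1) ^ (d - 1) * deltaVar X f (n + 1))
    {ε : ℝ} (hε : 0 < ε) : ∃ m : ℕ, deltaVar X f m < ε := by
  have h0 := hsum.tendsto_atTop_zero
  rw [Metric.tendsto_atTop] at h0
  obtain ⟨N, hN⟩ := h0 ε hε
  refine ⟨N + 1, ?_⟩
  have h1 := hN N le_rfl
  rw [Real.dist_eq, sub_zero] at h1
  have hnn : 0 ≤ deltaVar X f (N + 1) := deltaVar_nonneg hne hC _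
  have hfac : (1 : ℝ) ≤ ((N : ℝ) + 1) ^ (d - 1) :=
    one_le_pow₀ (by have := Nat.cast_nonneg (α := ℝ) N; linarith)
  have : deltaVar X f (N + 1) ≤ ((N : ℝ) + 1) ^ (d - 1) * deltaVar X f (N + 1) :=
    le_mul_of_one_le_left hnn hfac
  have h2 : ((N : ℝ) + 1) ^ (d - 1) * deltaVar X f (N + 1) < ε := by
    have : |((N : ℝ) + 1) ^ (d - 1) * deltaVar X f (N + 1)| < ε := h1
    exact (le_abs_self _).trans_lt this
  linarith

lemma continuousOn_of_memSV [TopologicalSpace A] [DiscreteTopology A] (hne : X.Nonempty) (hC : ∀ x ∈ X, |f x| ≤ C)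
    (hsum : Summable fun n : ℕ => ((n : ℝ) + 1) ^ (d - 1) * deltaVar X f (n + 1)) :
    ContinuousOn f X := by
  intro x hx
  rw [ContinuousWithinAt, Metric.tendsto_nhds]
  intro ε hε
  obtain ⟨m, hm⟩ := exists_deltaVar_lt hne hC hsum hε
  set V : Set (Config d A) := {y : Config d A | ∀ k ∈ boxF d m, y k = x k} with hVdef
  have hVopen : IsOpen V := by
    have : V = ⋂ k ∈ boxF d m, (fun y : Config d A => y k) ⁻¹' {x k} := by
      ext y; simp [hVdef]
    rw [this]
    exact isOpen_biInter_finset fun k _ =>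
      (continuous_apply k).isOpen_preimage _ (isOpen_discrete _)
  have hxV : x ∈ V := fun k _ => rfl
  filter_upwards [mem_nhdsWithin_of_mem_nhds (hVopen.mem_nhds hxV), self_mem_nhdsWithin]
    with y hyV hyX
  rw [Real.dist_eq]
  calc |f y - f x| ≤ deltaVar X f m :=
        deltaVar_le_of_agree hC hyX hx (fun k hk => hyV k (mem_boxF.2 hk))
    _ < ε := hm

end Delta
section Summab
variable {d : ℕ} {A : Type*} {X : Set (Config d A)} {f : Config d A → ℝ} {C : ℝ}

lemma summable_h (hne : X.Nonempty) (hC : ∀ x ∈ X, |f x| ≤ C)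
    (hsum : Summable fun n : ℕ => ((n : ℝ) + 1) ^ (d - 1) * deltaVar X f (n + 1)) :
    Summable fun j : ℕ => ((j : ℝ) + 1) ^ (d - 1) * deltaVar X f j := by
  rw [← summable_nat_add_iff 1]
  refine Summable.of_nonneg_of_le
    (f := fun n : ℕ => 2 ^ (d-1) * (((n : ℝ) + 1) ^ (d - 1) * deltaVar X f (n + 1)))
    (fun n => mul_nonneg (by positivity) (deltaVar_nonneg hne hC _)) ?_ (hsum.mul_left _)
  · intro n
    show ((((n + 1 : ℕ)) : ℝ) + 1) ^ (d - 1) * deltaVar X f (n + 1)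
        ≤ 2 ^ (d - 1) * (((n : ℝ) + 1) ^ (d - 1) * deltaVar X f (n + 1))
    have hpw : ((((n + 1 : ℕ)) : ℝ) + 1) ^ (d - 1)
        ≤ 2 ^ (d - 1) * ((n : ℝ) + 1) ^ (d - 1) := by
      rw [← mul_pow]
      apply pow_le_pow_left₀ (by positivity)
      push_cast
      linarith [Nat.cast_nonneg (α := ℝ) n]
    rw [← mul_assoc]
    exact mul_le_mul_of_nonneg_right hpw (deltaVar_nonneg hne hC _)

lemma summable_shift_diff (hne : X.Nonempty) (hC : ∀ x ∈ X, |f x| ≤ C)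
    (hinv : ∀ k : Fin d → ℤ, ∀ x ∈ X, shift k x ∈ X)
    (hsum : Summable fun n : ℕ => ((n : ℝ) + 1) ^ (d - 1) * deltaVar X f (n + 1))
    {Λ : Finset (Fin d → ℤ)} {z1 z2 : Config d A}
    (h1 : z1 ∈ X) (h2 : z2 ∈ X) (hagree : ∀ k, k ∉ Λ → z1 k = z2 k) :
    Summable fun i : Fin d → ℤ => f (shift i z1) - f (shift i z2) := by
  classical
  have hC0 : 0 ≤ C := (abs_nonneg _).trans (hC _ h1)
  set R := Λ.sup normInf with hR
  set δ := deltaVar X f with hδ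
  set c : (Fin d → ℤ) → ℝ := fun i =>
    if normInf i ≤ R then 2 * C else δ (normInf i - (R + 1)) with hc
  have hc0 : ∀ i, 0 ≤ c i := by
    intro i
    simp only [hc]
    split
    · linarith
    · exact deltaVar_nonneg hne hC _
  have hbound : ∀ i, |f (shift i z1) - f (shift i z2)| ≤ c i := by
    intro i
    simp only [hc]
    split
    case isTrue h =>
      calc |f (shift i z1) - f (shift i z2)| ≤ |f (shift i z1)| + |f (shift i z2)| :=
            abs_sub _ _
        _ ≤ 2 * C := by
            have := hC _ (hinv i _ h1); have := hC _ (hinv i _ h2); linarith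
    case isFalse h =>
      push_neg at h
      apply deltaVar_le_of_agree hC (hinv i _ h1) (hinv i _ h2)
      intro k hk
      show z1 (k + i) = z2 (k + i)
      apply hagree
      intro hkΛ
      have h1' : normInf (k + i) ≤ R := Finset.le_sup hkΛ
      have h2' := normInf_triangle k i
      omega
  -- the key partial-sum bound
  set hfn : ℕ → ℝ := fun j => ((j : ℝ) + 1) ^ (d - 1) * δ j with hhfn
  have hhsummable : Summable hfn := summable_h hne hC hsum
  have hh0 : ∀ j, 0 ≤ hfn j :=
    fun j => mul_nonneg (by positivity) (deltaVar_nonneg hne hC _)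
  set T := ∑' j, hfn j with hT
  set K : ℝ := 2 * d * (2 * (R : ℝ) + 3) ^ (d - 1) with hK
  have hK0 : 0 ≤ K := by positivity
  have hbox : ∀ N : ℕ, ∑ i ∈ boxF d (R + N), c i ≤
      (2 * (R : ℝ) + 1) ^ d * (2 * C) + K * ∑ j ∈ Finset.range N, hfn j := by
    intro N
    induction N with
    | zero =>
      simp only [Nat.add_zero, Finset.range_zero, Finset.sum_empty, mul_zero, add_zero]
      have : ∀ i ∈ boxF d R, c i = 2 * C := by
        intro i hi
        simp only [hc, if_pos (mem_boxF.1 hi)]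
      rw [Finset.sum_congr rfl this, Finset.sum_const, card_boxF, nsmul_eq_mul]
      push_cast
      ring_nf
      exact le_refl _
    | succ N ih =>
      have hsub : boxF d (R + N) ⊆ boxF d (R + N + 1) := boxF_mono (by omega)
      rw [show R + (N + 1) = R + N + 1 by omega, ← Finset.sum_sdiff hsub]
      have hval : ∀ i ∈ boxF d (R + N + 1) \ boxF d (R + N), c i = δ N := by
        intro i hi
        rw [Finset.mem_sdiff, mem_boxF, mem_boxF] at hi
        have : normInf i = R + N + 1 := by omega
        simp only [hc, this]
        rw [if_neg (by omega)]
        congr 1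
        omega
      rw [Finset.sum_congr rfl hval, Finset.sum_const, nsmul_eq_mul,
        Finset.card_sdiff_of_subset hsub, card_boxF, card_boxF]
      have hcard_mono : (2 * (R + N) + 1) ^ d ≤ (2 * (R + N + 1) + 1) ^ d :=
        Nat.pow_le_pow_left (by omega) d
      have hcast : (((2 * (R + N + 1) + 1) ^ d - (2 * (R + N) + 1) ^ d : ℕ) : ℝ)
          = (2 * ((R : ℝ) + N) + 3) ^ d - (2 * ((R : ℝ) + N) + 1) ^ d := by
        rw [Nat.cast_sub hcard_mono]
        push_cast
        ring_nf
      rw [hcast]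
      have hδN : 0 ≤ δ N := deltaVar_nonneg hne hC _
      have hstep : ((2 * ((R : ℝ) + N) + 3) ^ d - (2 * ((R : ℝ) + N) + 1) ^ d) * δ N
          ≤ K * hfn N := by
        have hp := pow_sub_pow_le_real d (2 * ((R : ℝ) + N) + 3) (2 * ((R : ℝ) + N) + 1)
          (by positivity) (by linarith)
        have hbase : (2 * ((R : ℝ) + N) + 3) ≤ (2 * (R : ℝ) + 3) * ((N : ℝ) + 1) := by
          nlinarith [Nat.cast_nonneg (α := ℝ) R, Nat.cast_nonneg (α := ℝ) N]
        have hpow : (2 * ((R : ℝ) + N) + 3) ^ (d - 1)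
            ≤ (2 * (R : ℝ) + 3) ^ (d - 1) * ((N : ℝ) + 1) ^ (d - 1) := by
          rw [← mul_pow]
          exact pow_le_pow_left₀ (by positivity) hbase _
        have : (2 * ((R : ℝ) + N) + 3) ^ d - (2 * ((R : ℝ) + N) + 1) ^ d
            ≤ 2 * d * ((2 * (R : ℝ) + 3) ^ (d - 1) * ((N : ℝ) + 1) ^ (d - 1)) := by
          calc (2 * ((R : ℝ) + N) + 3) ^ d - (2 * ((R : ℝ) + N) + 1) ^ d
              ≤ d * (2 * ((R : ℝ) + N) + 3) ^ (d - 1) * (2 * ((R:ℝ) + N) + 3 - (2 * ((R:ℝ) + N) + 1)) := hp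
            _ = 2 * d * (2 * ((R : ℝ) + N) + 3) ^ (d - 1) := by ring
            _ ≤ 2 * d * ((2 * (R : ℝ) + 3) ^ (d - 1) * ((N : ℝ) + 1) ^ (d - 1)) := by
                apply mul_le_mul_of_nonneg_left hpow (by positivity)
        calc ((2 * ((R : ℝ) + N) + 3) ^ d - (2 * ((R : ℝ) + N) + 1) ^ d) * δ N
            ≤ 2 * d * ((2 * (R : ℝ) + 3) ^ (d - 1) * ((N : ℝ) + 1) ^ (d - 1)) * δ N :=
              mul_le_mul_of_nonneg_right this hδN
          _ = K * hfn N := by rw [hK, hhfn]; ring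
      rw [Finset.sum_range_succ]
      calc ((2 * ((R:ℝ) + N) + 3) ^ d - (2 * ((R:ℝ) + N) + 1) ^ d) * δ N
            + ∑ i ∈ boxF d (R + N), c i
          ≤ K * hfn N + ((2 * (R : ℝ) + 1) ^ d * (2 * C)
              + K * ∑ j ∈ Finset.range N, hfn j) := add_le_add hstep ih
        _ = (2 * (R : ℝ) + 1) ^ d * (2 * C)
              + K * (∑ j ∈ Finset.range N, hfn j + hfn N) := by ring
  have hsumc : Summable c := by
    apply summable_of_sum_le (c := (2 * (R : ℝ) + 1) ^ d * (2 * C) + K * T) hc0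
    intro u
    set N := u.sup normInf with hN
    have hsub : u ⊆ boxF d (R + N) := by
      intro i hi
      rw [mem_boxF]
      exact le_trans (Finset.le_sup hi) (by omega)
    calc ∑ i ∈ u, c i ≤ ∑ i ∈ boxF d (R + N), c i :=
          Finset.sum_le_sum_of_subset_of_nonneg hsub (fun i _ _ => hc0 i)
      _ ≤ (2 * (R : ℝ) + 1) ^ d * (2 * C) + K * ∑ j ∈ Finset.range N, hfn j := hbox N
      _ ≤ (2 * (R : ℝ) + 1) ^ d * (2 * C) + K * T := by
          have := Summable.sum_le_tsum (Finset.range N) (fun j _ => hh0 j) hhsummable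
          have := mul_le_mul_of_nonneg_left this hK0
          linarith
  apply Summable.of_abs
  exact Summable.of_nonneg_of_le (fun i => abs_nonneg _) hbound hsumc

end Summab
section Limits
variable {d : ℕ} {A : Type*} [Fintype A] {X : Set (Config d A)} {f : Config d A → ℝ} {C : ℝ}

lemma tendsto_fnSum_sub (hne : X.Nonempty) (hC : ∀ x ∈ X, |f x| ≤ C)
    (hinv : ∀ k : Fin d → ℤ, ∀ x ∈ X, shift k x ∈ X)
    (hsum : Summable fun n : ℕ => ((n : ℝ) + 1) ^ (d - 1) * deltaVar X f (n + 1))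
    {Λ : Finset (Fin d → ℤ)} {z1 z2 : Config d A}
    (h1 : z1 ∈ X) (h2 : z2 ∈ X) (hagree : ∀ k, k ∉ Λ → z1 k = z2 k) :
    Tendsto (fun n => fnSum d f n z1 - fnSum d f n z2) atTop
      (𝓝 (∑' i : Fin d → ℤ, (f (shift i z1) - f (shift i z2)))) := by
  have hs := summable_shift_diff hne hC hinv hsum h1 h2 hagree
  have h3 := hs.hasSum.comp (tendsto_boxF_atTop (d := d))
  refine h3.congr (fun n => ?_)
  simp only [Function.comp, fnSum, Finset.sum_sub_distrib]

/-- The limiting weight of a configuration `ω` on `Λ`, relative to reference `η0`. -/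
noncomputable def wLim (d : ℕ) {A : Type*} (X : Set (Config d A)) (f : Config d A → ℝ)
    (Λ : Finset (Fin d → ℤ)) (η0 : {k // k ∈ Λ} → A) (z : Config d A)
    (ω : {k // k ∈ Λ} → A) : ℝ :=
  X.indicator (fun z' => Real.exp (∑' i : Fin d → ℤ,
    (f (shift i z') - f (shift i (patch Λ η0 z))))) (patch Λ ω z)

/-- The limit of the finite-volume ratios. -/
noncomputable def gammaLim (d : ℕ) {A : Type*} [Fintype A] (X : Set (Config d A))
    (f : Config d A → ℝ) (Λ : Finset (Fin d → ℤ)) (η0 : {k // k ∈ Λ} → A)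
    (S : Set ↥X) (z : Config d A) : ℝ :=
  (∑ ω : {k // k ∈ Λ} → A,
      (Subtype.val '' S).indicator (fun z' => Real.exp (∑' i : Fin d → ℤ,
        (f (shift i z') - f (shift i (patch Λ η0 z))))) (patch Λ ω z))
    / ∑ η : {k // k ∈ Λ} → A, wLim d X f Λ η0 z η

lemma wLim_nonneg (d : ℕ) (X : Set (Config d A)) (f : Config d A → ℝ)
    (Λ : Finset (Fin d → ℤ)) (η0 : {k // k ∈ Λ} → A) (z : Config d A)
    (ω : {k // k ∈ Λ} → A) : 0 ≤ wLim d X f Λ η0 z ω := by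
  unfold wLim
  by_cases h : patch Λ ω z ∈ X
  · rw [Set.indicator_of_mem h]
    exact (Real.exp_pos _).le
  · rw [Set.indicator_of_notMem h]

lemma wLim_self {Λ : Finset (Fin d → ℤ)} {η0 : {k // k ∈ Λ} → A} {z : Config d A}
    (h0 : patch Λ η0 z ∈ X) : wLim d X f Λ η0 z η0 = 1 := by
  unfold wLim
  rw [Set.indicator_of_mem h0]
  simp

lemma sum_wLim_pos {Λ : Finset (Fin d → ℤ)} {η0 : {k // k ∈ Λ} → A} {z : Config d A}
    (h0 : patch Λ η0 z ∈ X) :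
    0 < ∑ η : {k // k ∈ Λ} → A, wLim d X f Λ η0 z η := by
  apply Finset.sum_pos' (fun ω _ => wLim_nonneg d X f Λ η0 z ω)
  exact ⟨η0, Finset.mem_univ _, by rw [wLim_self (f := f) h0]; exact one_pos⟩

lemma gammaFn_tendsto (hne : X.Nonempty) (hC : ∀ x ∈ X, |f x| ≤ C)
    (hinv : ∀ k : Fin d → ℤ, ∀ x ∈ X, shift k x ∈ X)
    (hsum : Summable fun n : ℕ => ((n : ℝ) + 1) ^ (d - 1) * deltaVar X f (n + 1))
    {Λ : Finset (Fin d → ℤ)} (S : Set ↥X) (z : Config d A)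
    (η0 : {k // k ∈ Λ} → A) (h0 : patch Λ η0 z ∈ X) :
    Tendsto (fun n => gammaFn d X f Λ S z n) atTop (𝓝 (gammaLim d X f Λ η0 S z)) := by
  classical
  have hagree : ∀ ω : {k // k ∈ Λ} → A, ∀ k, k ∉ Λ →
      patch Λ ω z k = patch Λ η0 z k := by
    intro ω k hk
    simp [patch, hk]
  have hnum : Tendsto (fun n => ∑ ω : {k // k ∈ Λ} → A,
      (Subtype.val '' S).indicator (fun z' => Real.exp (fnSum d f n z')) (patch Λ ω z)
        * Real.exp (- fnSum d f n (patch Λ η0 z))) atTop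
      (𝓝 (∑ ω : {k // k ∈ Λ} → A,
        (Subtype.val '' S).indicator (fun z' => Real.exp (∑' i : Fin d → ℤ,
          (f (shift i z') - f (shift i (patch Λ η0 z))))) (patch Λ ω z))) := by
    apply tendsto_finset_sum
    intro ω _
    by_cases hmem : patch Λ ω z ∈ Subtype.val '' S
    · have hX : patch Λ ω z ∈ X := by
        obtain ⟨b, -, hb⟩ := hmem
        exact hb ▸ b.2
      rw [Set.indicator_of_mem hmem]
      have hconv := (Real.continuous_exp.tendsto _).comp
        (tendsto_fnSum_sub hne hC hinv hsum hX h0 (hagree ω))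
      refine hconv.congr (fun n => ?_)
      simp only [Function.comp]
      rw [Set.indicator_of_mem hmem, ← Real.exp_add]
      try congr 1
      try ring
    · rw [Set.indicator_of_notMem hmem]
      refine tendsto_const_nhds.congr (fun n => ?_)
      rw [Set.indicator_of_notMem hmem, zero_mul]
  have hden : Tendsto (fun n => ∑ η : {k // k ∈ Λ} → A,
      X.indicator (fun z' => Real.exp (fnSum d f n z')) (patch Λ η z)
        * Real.exp (- fnSum d f n (patch Λ η0 z))) atTop
      (𝓝 (∑ η : {k // k ∈ Λ} → A, wLim d X f Λ η0 z η)) := by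
    apply tendsto_finset_sum
    intro η _
    unfold wLim
    by_cases hX : patch Λ η z ∈ X
    · rw [Set.indicator_of_mem hX]
      have hconv := (Real.continuous_exp.tendsto _).comp
        (tendsto_fnSum_sub hne hC hinv hsum hX h0 (hagree η))
      refine hconv.congr (fun n => ?_)
      simp only [Function.comp]
      rw [Set.indicator_of_mem hX, ← Real.exp_add]
      try congr 1
      try ring
    · rw [Set.indicator_of_notMem hX]
      refine tendsto_const_nhds.congr (fun n => ?_)
      rw [Set.indicator_of_notMem hX, zero_mul]
  have hpos := sum_wLim_pos (f := f) h0
  have hdiv := hnum.div hden (ne_of_gt hpos)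
  rw [gammaLim]
  refine hdiv.congr (fun n => ?_)
  simp only [Pi.div_apply]
  rw [← Finset.sum_mul, ← Finset.sum_mul]
  exact mul_div_mul_right _ _ (Real.exp_ne_zero _)

lemma gammaFn_eq_zero {Λ : Finset (Fin d → ℤ)} (S : Set ↥X) (z : Config d A)
    (h : ∀ η : {k // k ∈ Λ} → A, patch Λ η z ∉ X) (n : ℕ) :
    gammaFn d X f Λ S z n = 0 := by
  unfold gammaFn
  have hnum : ∀ ω : {k // k ∈ Λ} → A,
      (Subtype.val '' S).indicator (fun z' => Real.exp (fnSum d f n z')) (patch Λ ω z) = 0 := by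
    intro ω
    apply Set.indicator_of_notMem
    intro hmem
    obtain ⟨b, -, hb⟩ := hmem
    exact h ω (hb ▸ b.2)
  rw [Finset.sum_congr rfl (fun ω _ => hnum ω), Finset.sum_const, smul_zero, zero_div]

lemma gammaFn_tendsto_gamma (hne : X.Nonempty) (hC : ∀ x ∈ X, |f x| ≤ C)
    (hinv : ∀ k : Fin d → ℤ, ∀ x ∈ X, shift k x ∈ X)
    (hsum : Summable fun n : ℕ => ((n : ℝ) + 1) ^ (d - 1) * deltaVar X f (n + 1))
    {Λ : Finset (Fin d → ℤ)} (S : Set ↥X) (z : Config d A) :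
    Tendsto (gammaFn d X f Λ S z) atTop (𝓝 (gamma d X f Λ S z)) := by
  by_cases h : ∃ η0 : {k // k ∈ Λ} → A, patch Λ η0 z ∈ X
  · obtain ⟨η0, h0⟩ := h
    have ht := gammaFn_tendsto hne hC hinv hsum S z η0 h0
    rwa [gamma, ht.limUnder_eq]
  · push_neg at h
    have ht : Tendsto (gammaFn d X f Λ S z) atTop (𝓝 0) :=
      tendsto_const_nhds.congr (fun n => (gammaFn_eq_zero S z h n).symm)
    rwa [gamma, ht.limUnder_eq]

lemma gamma_eq_gammaLim (hne : X.Nonempty) (hC : ∀ x ∈ X, |f x| ≤ C)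
    (hinv : ∀ k : Fin d → ℤ, ∀ x ∈ X, shift k x ∈ X)
    (hsum : Summable fun n : ℕ => ((n : ℝ) + 1) ^ (d - 1) * deltaVar X f (n + 1))
    {Λ : Finset (Fin d → ℤ)} (S : Set ↥X) (z : Config d A)
    (η0 : {k // k ∈ Λ} → A) (h0 : patch Λ η0 z ∈ X) :
    gamma d X f Λ S z = gammaLim d X f Λ η0 S z :=
  (gammaFn_tendsto hne hC hinv hsum S z η0 h0).limUnder_eq

end Limits
section Parts
variable {d : ℕ} {A : Type*} [Fintype A] {X : Set (Config d A)} {f : Config d A → ℝ} {C : ℝ}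

lemma patch_self {Λ : Finset (Fin d → ℤ)} (x : Config d A) :
    patch Λ (fun k : {k // k ∈ Λ} => x k.1) x = x := by
  funext k
  by_cases h : k ∈ Λ <;> simp [patch, h]

/-- Part (a): the explicit probability measure. -/
lemma exists_prob_measure [MeasurableSpace A] (hne : X.Nonempty) (hC : ∀ x ∈ X, |f x| ≤ C)
    (hinv : ∀ k : Fin d → ℤ, ∀ x ∈ X, shift k x ∈ X)
    (hsum : Summable fun n : ℕ => ((n : ℝ) + 1) ^ (d - 1) * deltaVar X f (n + 1))
    (Λ : Finset (Fin d → ℤ)) {x : Config d A} (hx : x ∈ X) :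
    ∃ ν : Measure ↥X, IsProbabilityMeasure ν ∧
      ∀ S : Set ↥X, MeasurableSet S → (ν S).toReal = gamma d X f Λ S x := by
  classical
  set η0 : {k // k ∈ Λ} → A := fun k => x k.1 with hη0
  have hpatch0 : patch Λ η0 x = x := patch_self x
  have h0 : patch Λ η0 x ∈ X := by rw [hpatch0]; exact hx
  set w : ({k // k ∈ Λ} → A) → ℝ := wLim d X f Λ η0 x with hw
  have hw0 : ∀ ω, 0 ≤ w ω := wLim_nonneg d X f Λ η0 x
  set Z : ℝ := ∑ η : {k // k ∈ Λ} → A, w η with hZdef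
  have hZ : 0 < Z := sum_wLim_pos (f := f) h0
  set pt : ({k // k ∈ Λ} → A) → ↥X :=
    fun ω => if h : patch Λ ω x ∈ X then ⟨_, h⟩ else ⟨x, hx⟩ with hpt
  set ν : Measure ↥X :=
    ∑ ω : {k // k ∈ Λ} → A, ENNReal.ofReal (w ω / Z) • Measure.dirac (pt ω) with hν
  have hν_apply : ∀ (S : Set ↥X), MeasurableSet S →
      ν S = ∑ ω : {k // k ∈ Λ} → A,
        ENNReal.ofReal (w ω / Z) * S.indicator 1 (pt ω) := by
    intro S hS
    rw [hν, Measure.finset_sum_apply]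
    refine Finset.sum_congr rfl (fun ω _ => ?_)
    rw [Measure.smul_apply, Measure.dirac_apply' _ hS, smul_eq_mul]
  have hterm_ne_top : ∀ (S : Set ↥X) (ω : {k // k ∈ Λ} → A),
      ENNReal.ofReal (w ω / Z) * S.indicator 1 (pt ω) ≠ ⊤ := by
    intro S ω
    apply ENNReal.mul_ne_top ENNReal.ofReal_ne_top
    by_cases h : pt ω ∈ S
    · rw [Set.indicator_of_mem h]; exact ENNReal.one_ne_top
    · rw [Set.indicator_of_notMem h]; exact ENNReal.zero_ne_top
  refine ⟨ν, ⟨?_⟩, ?_⟩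
  · rw [hν_apply Set.univ MeasurableSet.univ]
    have : ∀ ω : {k // k ∈ Λ} → A,
        ENNReal.ofReal (w ω / Z) * (Set.univ : Set ↥X).indicator 1 (pt ω)
          = ENNReal.ofReal (w ω / Z) := by
      intro ω
      rw [Set.indicator_of_mem (Set.mem_univ _), Pi.one_apply, mul_one]
    rw [Finset.sum_congr rfl (fun ω _ => this ω),
      ← ENNReal.ofReal_sum_of_nonneg (fun ω _ => div_nonneg (hw0 ω) hZ.le),
      ← Finset.sum_div, ← hZdef, div_self hZ.ne', ENNReal.ofReal_one]
  · intro S hS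
    rw [gamma_eq_gammaLim hne hC hinv hsum S x η0 h0, gammaLim, hν_apply S hS,
      ENNReal.toReal_sum (fun ω _ => hterm_ne_top S ω), Finset.sum_div]
    refine Finset.sum_congr rfl (fun ω _ => ?_)
    rw [ENNReal.toReal_mul, ENNReal.toReal_ofReal (div_nonneg (hw0 ω) hZ.le)]
    by_cases hXω : patch Λ ω x ∈ X
    · have hptω : pt ω = ⟨patch Λ ω x, hXω⟩ := dif_pos hXω
      by_cases hmem : patch Λ ω x ∈ Subtype.val '' S
      · have hptS : pt ω ∈ S := by
          obtain ⟨b, hbS, hb⟩ := hmem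
          rw [hptω]
          have : (⟨patch Λ ω x, hXω⟩ : ↥X) = b := Subtype.ext hb.symm
          rw [this]; exact hbS
        rw [Set.indicator_of_mem hptS, Set.indicator_of_mem hmem, Pi.one_apply,
          ENNReal.toReal_one, mul_one]
        congr 1
        rw [hw]
        exact Set.indicator_of_mem hXω _
      · have hptS : pt ω ∉ S := by
          intro hin
          exact hmem ⟨pt ω, hin, by rw [hptω]⟩
        rw [Set.indicator_of_notMem hptS, Set.indicator_of_notMem hmem,
          ENNReal.toReal_zero, mul_zero, zero_div]
    · have hw0' : w ω = 0 := by rw [hw]; exact Set.indicator_of_notMem hXω _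
      have hmem : patch Λ ω x ∉ Subtype.val '' S := by
        intro hmem
        obtain ⟨b, -, hb⟩ := hmem
        exact hXω (hb ▸ b.2)
      rw [Set.indicator_of_notMem hmem, hw0']
      simp

end Parts
section PartsBC
variable {d : ℕ} {A : Type*} [Fintype A] [Nonempty A]
  {X : Set (Config d A)} {f : Config d A → ℝ} {C : ℝ}

/-- Extension of a configuration off `Λ` by a default symbol on `Λ`. -/
noncomputable def extMap (d : ℕ) {A : Type*} [Nonempty A] (Λ : Finset (Fin d → ℤ))
    (ξ : ↥((↑Λ : Set (Fin d → ℤ))ᶜ) → A) : Config d A :=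
  fun k => if h : k ∈ ((↑Λ : Set (Fin d → ℤ))ᶜ) then ξ ⟨k, h⟩ else Classical.arbitrary A

lemma patch_extMap {Λ : Finset (Fin d → ℤ)} (ω : {k // k ∈ Λ} → A) (z : Config d A) :
    patch Λ ω (extMap d Λ (fun i : ↥((↑Λ : Set (Fin d → ℤ))ᶜ) => z i.1)) = patch Λ ω z := by
  funext k
  by_cases h : k ∈ Λ
  · simp [patch, h]
  · have h' : k ∈ ((↑Λ : Set (Fin d → ℤ))ᶜ) := by simpa using h
    simp [patch, h, extMap, h']

lemma gammaFn_congr_patch {Λ : Finset (Fin d → ℤ)} {z z' : Config d A}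
    (h : ∀ ω : {k // k ∈ Λ} → A, patch Λ ω z = patch Λ ω z') (S : Set ↥X) (n : ℕ) :
    gammaFn d X f Λ S z n = gammaFn d X f Λ S z' n := by
  unfold gammaFn
  simp only [h]

lemma gamma_congr_patch {Λ : Finset (Fin d → ℤ)} {z z' : Config d A}
    (h : ∀ ω : {k // k ∈ Λ} → A, patch Λ ω z = patch Λ ω z') (S : Set ↥X) :
    gamma d X f Λ S z = gamma d X f Λ S z' := by
  unfold gamma
  congr 1
  funext n
  exact gammaFn_congr_patch h S n

/-- Part (b): measurability of the composed kernel. -/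
lemma measurable_gamma_extMap [TopologicalSpace A] [DiscreteTopology A]
    [MeasurableSpace A] [BorelSpace A]
    (hne : X.Nonempty) (hcl : IsClosed X) (hC : ∀ x ∈ X, |f x| ≤ C)
    (hinv : ∀ k : Fin d → ℤ, ∀ x ∈ X, shift k x ∈ X)
    (hsum : Summable fun n : ℕ => ((n : ℝ) + 1) ^ (d - 1) * deltaVar X f (n + 1))
    (Λ : Finset (Fin d → ℤ)) (S : Set ↥X) (hS : MeasurableSet S) :
    Measurable (fun ξ : ↥((↑Λ : Set (Fin d → ℤ))ᶜ) → A =>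
      gamma d X f Λ S (extMap d Λ ξ)) := by
  classical
  have hcont : ContinuousOn f X := continuousOn_of_memSV hne hC hsum
  obtain ⟨g, hg⟩ := ContinuousMap.exists_restrict_eq (Y := ℝ) hcl
    ⟨X.restrict f, hcont.restrict⟩
  have hgf : ∀ z ∈ X, g z = f z := by
    intro z hz
    have := DFunLike.congr_fun hg (⟨z, hz⟩ : ↥X)
    exact this
  have hXm : MeasurableSet X := hcl.measurableSet
  have hSm : MeasurableSet (Subtype.val '' S) := hXm.subtype_image hS
  have hP : ∀ ω : {k // k ∈ Λ} → A,
      Measurable (fun ξ : ↥((↑Λ : Set (Fin d → ℤ))ᶜ) → A => patch Λ ω (extMap d Λ ξ)) := by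
    intro ω
    apply measurable_pi_lambda
    intro k
    by_cases h : k ∈ Λ
    · simp only [patch, dif_pos h]
      exact measurable_const
    · have h' : k ∈ ((↑Λ : Set (Fin d → ℤ))ᶜ) := by simpa using h
      simp only [patch, dif_neg h, extMap, dif_pos h']
      exact measurable_pi_apply _
  have hind : ∀ (T : Set (Config d A)), T ⊆ X → ∀ (n : ℕ) (z : Config d A),
      T.indicator (fun z' => Real.exp (fnSum d f n z')) z
        = T.indicator (fun z' => Real.exp (fnSum d g n z')) z := by
    intro T hT n z
    by_cases hz : z ∈ T
    · rw [Set.indicator_of_mem hz, Set.indicator_of_mem hz]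
      congr 1
      exact Finset.sum_congr rfl (fun i _ => (hgf _ (hinv i z (hT hz))).symm)
    · rw [Set.indicator_of_notMem hz, Set.indicator_of_notMem hz]
  have hgm : ∀ n : ℕ, Measurable (fun z : Config d A => Real.exp (fnSum d g n z)) := by
    intro n
    apply Continuous.measurable
    apply Real.continuous_exp.comp
    apply continuous_finset_sum
    intro i _
    exact g.continuous.comp (continuous_pi fun j => continuous_apply (j + i))
  have hmeas : ∀ n, Measurable (fun ξ : ↥((↑Λ : Set (Fin d → ℤ))ᶜ) → A =>
      gammaFn d X f Λ S (extMap d Λ ξ) n) := by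
    intro n
    unfold gammaFn
    apply Measurable.div
    · apply Finset.measurable_sum
      intro ω _
      have heq : (fun ξ : ↥((↑Λ : Set (Fin d → ℤ))ᶜ) → A =>
          (Subtype.val '' S).indicator (fun z => Real.exp (fnSum d f n z))
            (patch Λ ω (extMap d Λ ξ)))
          = (fun ξ => (Subtype.val '' S).indicator (fun z => Real.exp (fnSum d g n z))
            (patch Λ ω (extMap d Λ ξ))) := by
        funext ξ
        exact hind _ (by rintro z ⟨b, -, rfl⟩; exact b.2) n _
      rw [heq]
      exact (((hgm n).indicator hSm)).comp (hP ω)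
    · apply Finset.measurable_sum
      intro η _
      have heq : (fun ξ : ↥((↑Λ : Set (Fin d → ℤ))ᶜ) → A =>
          X.indicator (fun z => Real.exp (fnSum d f n z)) (patch Λ η (extMap d Λ ξ)))
          = (fun ξ => X.indicator (fun z => Real.exp (fnSum d g n z))
            (patch Λ η (extMap d Λ ξ))) := by
        funext ξ
        exact hind _ (le_refl X) n _
      rw [heq]
      exact (((hgm n).indicator hXm)).comp (hP η)
  exact measurable_of_tendsto_metrizable hmeas
    (tendsto_pi_nhds.mpr fun ξ => gammaFn_tendsto_gamma hne hC hinv hsum S _)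

/-- Part (c). -/
lemma gamma_eq_indicator {Λ : Finset (Fin d → ℤ)}
    {M : Set (↥((↑Λ : Set (Fin d → ℤ))ᶜ) → A)} {B : Set ↥X}
    (hMB : (fun (y : ↥X) (i : ↥((↑Λ : Set (Fin d → ℤ))ᶜ)) => y.1 i.1) ⁻¹' M = B)
    (y : ↥X) :
    gamma d X f Λ B y.1 = B.indicator (fun _ => (1 : ℝ)) y := by
  classical
  have hoff : ∀ (ω : {k // k ∈ Λ} → A) (i : ↥((↑Λ : Set (Fin d → ℤ))ᶜ)),
      patch Λ ω y.1 i.1 = y.1 i.1 := by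
    intro ω i
    have : i.1 ∉ Λ := i.2
    simp [patch, this]
  have key : ∀ ω : {k // k ∈ Λ} → A,
      patch Λ ω y.1 ∈ Subtype.val '' B ↔ (patch Λ ω y.1 ∈ X ∧ y ∈ B) := by
    intro ω
    constructor
    · rintro ⟨b, hbB, hb⟩
      have hX : patch Λ ω y.1 ∈ X := hb ▸ b.2
      refine ⟨hX, ?_⟩
      rw [← hMB] at hbB ⊢
      have : (fun i : ↥((↑Λ : Set (Fin d → ℤ))ᶜ) => y.1 i.1)
          = (fun i : ↥((↑Λ : Set (Fin d → ℤ))ᶜ) => b.1 i.1) := by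
        funext i
        rw [hb]
        exact (hoff ω i).symm
      show (fun i : ↥((↑Λ : Set (Fin d → ℤ))ᶜ) => y.1 i.1) ∈ M
      rw [this]
      exact hbB
    · rintro ⟨hX, hyB⟩
      refine ⟨⟨patch Λ ω y.1, hX⟩, ?_, rfl⟩
      rw [← hMB] at hyB ⊢
      show (fun i : ↥((↑Λ : Set (Fin d → ℤ))ᶜ) => patch Λ ω y.1 i.1) ∈ M
      have : (fun i : ↥((↑Λ : Set (Fin d → ℤ))ᶜ) => patch Λ ω y.1 i.1)
          = (fun i : ↥((↑Λ : Set (Fin d → ℤ))ᶜ) => y.1 i.1) := by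
        funext i
        exact hoff ω i
      rw [this]
      exact hyB
  have hden_pos : ∀ n : ℕ, 0 < ∑ η : {k // k ∈ Λ} → A,
      X.indicator (fun z => Real.exp (fnSum d f n z)) (patch Λ η y.1) := by
    intro n
    apply Finset.sum_pos'
    · intro η _
      by_cases h : patch Λ η y.1 ∈ X
      · rw [Set.indicator_of_mem h]
        exact (Real.exp_pos _).le
      · rw [Set.indicator_of_notMem h]
    · refine ⟨fun k => y.1 k.1, Finset.mem_univ _, ?_⟩
      rw [patch_self, Set.indicator_of_mem y.2]
      exact Real.exp_pos _
  by_cases hy : y ∈ B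
  · have hconst : ∀ n, gammaFn d X f Λ B y.1 n = 1 := by
      intro n
      unfold gammaFn
      have : ∀ ω : {k // k ∈ Λ} → A,
          (Subtype.val '' B).indicator (fun z => Real.exp (fnSum d f n z)) (patch Λ ω y.1)
            = X.indicator (fun z => Real.exp (fnSum d f n z)) (patch Λ ω y.1) := by
        intro ω
        by_cases hX : patch Λ ω y.1 ∈ X
        · rw [Set.indicator_of_mem ((key ω).2 ⟨hX, hy⟩), Set.indicator_of_mem hX]
        · rw [Set.indicator_of_notMem hX, Set.indicator_of_notMem
            (fun hmem => hX ((key ω).1 hmem).1)]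
      rw [Finset.sum_congr rfl (fun ω _ => this ω)]
      exact div_self (hden_pos n).ne'
    have ht : Tendsto (gammaFn d X f Λ B y.1) atTop (𝓝 1) :=
      tendsto_const_nhds.congr (fun n => (hconst n).symm)
    rw [gamma, ht.limUnder_eq, Set.indicator_of_mem hy]
  · have hconst : ∀ n, gammaFn d X f Λ B y.1 n = 0 := by
      intro n
      unfold gammaFn
      have : ∀ ω : {k // k ∈ Λ} → A,
          (Subtype.val '' B).indicator (fun z => Real.exp (fnSum d f n z)) (patch Λ ω y.1)
            = 0 := by
        intro ω
        exact Set.indicator_of_notMem (fun hmem => hy ((key ω).1 hmem).2) _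
      rw [Finset.sum_congr rfl (fun ω _ => this ω), Finset.sum_const, smul_zero, zero_div]
    have ht : Tendsto (gammaFn d X f Λ B y.1) atTop (𝓝 0) :=
      tendsto_const_nhds.congr (fun n => (hconst n).symm)
    rw [gamma, ht.limUnder_eq, Set.indicator_of_notMem hy]

end PartsBC

/-- Properties of the kernels `γ_Λ`: (a) `γ_Λ(·|x)` is a Borel
probability measure on `X` for each `x ∈ X`; (b) `γ_Λ(S|·)` is `𝓕_{Λ^c}`-measurable;
(c) `γ_Λ(B|·) = 1_B` for every `B ∈ 𝓕_{Λ^c}`. -/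
theorem gamma_proper_kernel {d : ℕ} (hd : 1 ≤ d) {A : Type*} [Fintype A] [Nonempty A]
    [TopologicalSpace A] [DiscreteTopology A] [MeasurableSpace A] [BorelSpace A]
    (X : Set (Config d A)) (hne : X.Nonempty) (hcl : IsClosed X)
    (hinv : ∀ k : Fin d → ℤ, ∀ x ∈ X, shift k x ∈ X)
    (f : Config d A → ℝ) (hf : MemSV d X f)
    (Λ : Finset (Fin d → ℤ)) (hΛ : Λ.Nonempty) :
    (∀ x ∈ X, ∃ ν : Measure ↥X, IsProbabilityMeasure ν ∧
        ∀ S : Set ↥X, MeasurableSet S → (ν S).toReal = gamma d X f Λ S x) ∧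
    (∀ S : Set ↥X, MeasurableSet S →
        @Measurable ↥X ℝ (cylSigma X ((↑Λ : Set (Fin d → ℤ))ᶜ)) _
          (fun y : ↥X => gamma d X f Λ S y.1)) ∧
    (∀ B : Set ↥X, MeasurableSet[cylSigma X ((↑Λ : Set (Fin d → ℤ))ᶜ)] B →
        ∀ y : ↥X, gamma d X f Λ B y.1 = B.indicator (fun _ => (1 : ℝ)) y) := by
  obtain ⟨C, hC⟩ := hf.1
  have hsum := hf.2
  refine ⟨?_, ?_, ?_⟩
  · intro x hx
    exact exists_prob_measure hne hC hinv hsum Λ hx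
  · intro S hS
    have hmeasG := measurable_gamma_extMap hne hcl hC hinv hsum Λ S hS
    have hfac : (fun y : ↥X => gamma d X f Λ S y.1)
        = (fun ξ => gamma d X f Λ S (extMap d Λ ξ)) ∘
          (fun (y : ↥X) (i : ↥((↑Λ : Set (Fin d → ℤ))ᶜ)) => y.1 i.1) := by
      funext y
      exact (gamma_congr_patch (fun ω => patch_extMap ω y.1) S).symm
    rw [hfac]
    have hπ : @Measurable ↥X (↥((↑Λ : Set (Fin d → ℤ))ᶜ) → A)
        (cylSigma X ((↑Λ : Set (Fin d → ℤ))ᶜ)) _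
        (fun (y : ↥X) (i : ↥((↑Λ : Set (Fin d → ℤ))ᶜ)) => y.1 i.1) :=
      measurable_iff_comap_le.mpr le_rfl
    exact hmeasG.comp hπ
  · intro B hB y
    obtain ⟨M, hM, hMB⟩ := hB
    exact gamma_eq_indicator hMB y
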